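/- Let (Z, μ) be a measure space, and let p_src, p_tgt : Z → ℝ be nonnegative measurable density functions with ∫ p_src dμ = 1. Let f, g, h : Z → ℝ be nonnegative measurable functions such that g(z) ≤ f(z) + h(z) for all z ∈ Z (the triangle-inequality decomposition of the target loss integrand), and suppose there are constants c > 0 and ε > 0 with h(z) ≤ c for all z ∈ Z and |p_src(z) − p_tgt(z)| ≤ ε · p_src(z) for all z ∈ Z. Assume p_src · f and p_src · h are μ-integrable. Define L_src = ∫ p_src(z) f(z) dμ(z) and L_tgt = ∫ p_tgt(z) g(z) dμ(z). Then L_tgt − L_src ≤ ε · L_src + c + c · ε. -/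

import Mathlib

open MeasureTheory

theorem dane_theorem1
    {Z : Type*} [MeasurableSpace Z] (μ : Measure Z)
    (p_src p_tgt f g h : Z → ℝ)
    (hps_meas : Measurable p_src) (hpt_meas : Measurable p_tgt)
    (hf_meas : Measurable f) (hg_meas : Measurable g) (hh_meas : Measurable h)
    (hps_nonneg : ∀ z, 0 ≤ p_src z) (hpt_nonneg : ∀ z, 0 ≤ p_tgt z)
    (hf_nonneg : ∀ z, 0 ≤ f z) (hg_nonneg : ∀ z, 0 ≤ g z) (hh_nonneg : ∀ z, 0 ≤ h z)
    (hps_prob : ∫ z, p_src z ∂μ = 1)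
    (hgfh : ∀ z, g z ≤ f z + h z)
    (c ε : ℝ) (hc : 0 < c) (hε : 0 < ε)
    (hhc : ∀ z, h z ≤ c)
    (hdens : ∀ z, |p_src z - p_tgt z| ≤ ε * p_src z)
    (hint_f : Integrable (fun z => p_src z * f z) μ)
    (hint_h : Integrable (fun z => p_src z * h z) μ) :
    (∫ z, p_tgt z * g z ∂μ) - (∫ z, p_src z * f z ∂μ) ≤
      ε * (∫ z, p_src z * f z ∂μ) + c + c * ε := by
  -- p_src is integrable since its integral is 1 ≠ 0
  have hps_int : Integrable p_src μ := by
    by_contra hcon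
    rw [integral_undef hcon] at hps_prob
    exact one_ne_zero hps_prob.symm
  -- p_tgt z ≤ (1+ε) p_src z
  have hpt_le : ∀ z, p_tgt z ≤ (1 + ε) * p_src z := by
    intro z
    have := (abs_le.mp (hdens z)).1
    nlinarith
  -- pointwise bound for the target integrand
  have hpoint : ∀ z, p_tgt z * g z ≤ (1 + ε) * (p_src z * f z + p_src z * h z) := by
    intro z
    have h1 : p_tgt z * g z ≤ ((1 + ε) * p_src z) * g z :=
      mul_le_mul_of_nonneg_right (hpt_le z) (hg_nonneg z)
    have h2 : ((1 + ε) * p_src z) * g z ≤ ((1 + ε) * p_src z) * (f z + h z) := by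
      apply mul_le_mul_of_nonneg_left (hgfh z)
      exact mul_nonneg (by linarith) (hps_nonneg z)
    calc p_tgt z * g z ≤ ((1 + ε) * p_src z) * (f z + h z) := le_trans h1 h2
      _ = (1 + ε) * (p_src z * f z + p_src z * h z) := by ring
  have hmaj : Integrable (fun z => (1 + ε) * (p_src z * f z + p_src z * h z)) μ :=
    ((hint_f.add hint_h).const_mul _)
  have hint_tg : Integrable (fun z => p_tgt z * g z) μ := by
    apply hmaj.mono' (hpt_meas.mul hg_meas).aestronglyMeasurable
    filter_upwards with z
    rw [Real.norm_eq_abs, Pi.mul_apply, abs_of_nonneg (mul_nonneg (hpt_nonneg z) (hg_nonneg z))]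
    exact hpoint z
  have hIle : (∫ z, p_tgt z * g z ∂μ) ≤
      (1 + ε) * ((∫ z, p_src z * f z ∂μ) + (∫ z, p_src z * h z ∂μ)) := by
    calc (∫ z, p_tgt z * g z ∂μ)
        ≤ ∫ z, (1 + ε) * (p_src z * f z + p_src z * h z) ∂μ :=
          integral_mono hint_tg hmaj hpoint
      _ = (1 + ε) * ((∫ z, p_src z * f z ∂μ) + (∫ z, p_src z * h z ∂μ)) := by
          rw [integral_const_mul, integral_add hint_f hint_h]
  have hIh : (∫ z, p_src z * h z ∂μ) ≤ c := by
    have : (∫ z, p_src z * h z ∂μ) ≤ ∫ z, p_src z * c ∂μ := by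
      apply integral_mono hint_h (hps_int.mul_const c)
      intro z
      exact mul_le_mul_of_nonneg_left (hhc z) (hps_nonneg z)
    rwa [integral_mul_const, hps_prob, one_mul] at this
  have hIf : 0 ≤ (∫ z, p_src z * f z ∂μ) :=
    integral_nonneg fun z => mul_nonneg (hps_nonneg z) (hf_nonneg z)
  nlinarith
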